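/- Let ι be a nonempty finite type, f : ι → ℝ, and let M = {i : ι | f i = (maximum value of f over ι)}. As λ → ∞ (Filter.atTop), the softmax probability softmax λ f i = Real.exp (λ * f i) / ∑ j, Real.exp (λ * f j) tends to 1 / (cardinality of M) if i ∈ M, and tends to 0 if i ∉ M. (This makes precise the paper's claim that as λ → ∞ the policy σ_λ selects uniformly from the actions that maximize performance.) -/

import Mathlib

open scoped Classical

theorem softmax_tendsto_uniform_on_argmax
    {ι : Type*} [Fintype ι] [Nonempty ι] (f : ι → ℝ)
    (M : Finset ι)
    (hM : M = Finset.univ.filter (fun k => f k = Finset.univ.sup' Finset.univ_nonempty f))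
    (i : ι) :
    (i ∈ M →
      Filter.Tendsto (fun l : ℝ => Real.exp (l * f i) / ∑ j, Real.exp (l * f j))
        Filter.atTop (nhds (1 / M.card))) ∧
    (i ∉ M →
      Filter.Tendsto (fun l : ℝ => Real.exp (l * f i) / ∑ j, Real.exp (l * f j))
        Filter.atTop (nhds 0)) := by
  set F := Finset.univ.sup' Finset.univ_nonempty f with hF
  have hle : ∀ j, f j ≤ F := fun j => Finset.le_sup' f (Finset.mem_univ j)
  have hmem : ∀ j, j ∈ M ↔ f j = F := by intro j; simp [hM]
  -- limit of each shifted exponential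
  have hterm : ∀ j : ι, Filter.Tendsto (fun l : ℝ => Real.exp (l * (f j - F)))
      Filter.atTop (nhds (if f j = F then 1 else 0)) := by
    intro j
    by_cases h : f j = F
    · simp [h]
    · rw [if_neg h]
      have hlt : f j - F < 0 := sub_neg.mpr (lt_of_le_of_ne (hle j) h)
      have h1 : Filter.Tendsto (fun l : ℝ => l * (f j - F)) Filter.atTop Filter.atBot :=
        Filter.tendsto_id.atTop_mul_const_of_neg hlt
      exact Real.tendsto_exp_atBot.comp h1
  have hsum : Filter.Tendsto (fun l : ℝ => ∑ j, Real.exp (l * (f j - F)))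
      Filter.atTop (nhds (M.card : ℝ)) := by
    have := tendsto_finset_sum Finset.univ (fun j _ => hterm j)
    convert this using 2
    simp [hM, Finset.sum_boole]
  have hcardpos : (0 : ℝ) < M.card := by
    obtain ⟨j, _, hj⟩ := Finset.exists_mem_eq_sup' (Finset.univ_nonempty (α := ι)) f
    have : j ∈ M := (hmem j).mpr hj.symm
    exact_mod_cast Finset.card_pos.mpr ⟨j, this⟩
  -- rewrite the softmax in shifted form
  have heq : ∀ l : ℝ, Real.exp (l * f i) / ∑ j, Real.exp (l * f j)
      = Real.exp (l * (f i - F)) / ∑ j, Real.exp (l * (f j - F)) := by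
    intro l
    have h1 : ∀ j, Real.exp (l * f j) = Real.exp (l * (f j - F)) * Real.exp (l * F) := by
      intro j; rw [← Real.exp_add]; ring_nf
    simp only [h1, ← Finset.sum_mul]
    rw [mul_div_mul_right _ _ (Real.exp_ne_zero _)]
  constructor
  · intro hi
    have hfi : f i = F := (hmem i).mp hi
    have hnum : Filter.Tendsto (fun l : ℝ => Real.exp (l * (f i - F)))
        Filter.atTop (nhds 1) := by simpa [hfi] using hterm i
    have := hnum.div hsum (ne_of_gt hcardpos)
    simp only [heq]
    exact this
  · intro hi
    have hfi : f i ≠ F := fun h => hi ((hmem i).mpr h)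
    have hnum : Filter.Tendsto (fun l : ℝ => Real.exp (l * (f i - F)))
        Filter.atTop (nhds 0) := by simpa [hfi] using hterm i
    have := hnum.div hsum (ne_of_gt hcardpos)
    simp only [heq]
    simpa [Pi.div_def] using this
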